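/- Let −1/2 < s ≤ 0, let n ≥ 1 be an integer, and let K > 0 satisfy 2K ≤ n^{1/2 − |s|}. Let a, b⁺, b⁻ be complex analytic functions on an open set containing the strip S_n = {λ ∈ ℂ : |Re λ − n²π²| ≤ 12n} such that sup_{λ∈S_n} |a(λ)| ≤ K and ⟨2n⟩^{s} sup_{λ∈S_n} |b^{±}(λ)| ≤ 2K. Then the function χ(λ) := (λ − n²π² − a(λ))² − b⁺(λ)b⁻(λ) has exactly two zeros in S_n counted with multiplicity; both zeros lie in the disc D_n = {λ ∈ ℂ : |λ − n²π²| ≤ 4 n^{1/2}}, and if ξ₁, ξ₂ denote these zeros then |ξ₁ − ξ₂| ≤ √6 · sup_{λ∈S_n} |b⁺(λ) b⁻(λ)|^{1/2}. -/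

import Mathlib

open Metric Set Complex
open scoped NNReal Topology
open Filter

lemma analyticOnNhd_dslope' {f : ℂ → ℂ} {V : Set ℂ} (hf : AnalyticOnNhd ℂ f V) {c : ℂ}
    (hc : c ∈ V) : AnalyticOnNhd ℂ (dslope f c) V := by
  intro z hz
  rcases eq_or_ne z c with rfl | hne
  · rcases hf z hz with ⟨p, hp⟩
    exact (hp.has_fpower_series_dslope_fslope).analyticAt
  · have h1 : AnalyticAt ℂ (fun w => (w - c)⁻¹ * (f w - f c)) z := by
      exact (((analyticAt_id.sub analyticAt_const).inv (sub_ne_zero.mpr hne))).mul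
        ((hf z hz).sub analyticAt_const)
    apply h1.congr
    filter_upwards [eventually_ne_nhds hne] with w hw
    rw [dslope_of_ne _ hw, slope_def_field]
    rw [div_eq_inv_mul]

lemma cauchy_deriv_bound' {f : ℂ → ℂ} {V : Set ℂ} (hf : AnalyticOnNhd ℂ f V) {c : ℂ} {R C : ℝ}
    (hR : 0 < R) (hsub : closedBall c R ⊆ V) (hC : ∀ z ∈ sphere c R, ‖f z‖ ≤ C) :
    ‖deriv f c‖ ≤ C / R := by
  refine Complex.norm_deriv_le_of_forall_mem_sphere_norm_le hR ⟨?_, ?_⟩ hC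
  · exact fun z hz => ((hf z (hsub (ball_subset_closedBall hz))).differentiableAt).differentiableWithinAt
  · rw [closure_ball c hR.ne']
    exact fun z hz => ((hf z (hsub hz)).continuousAt).continuousWithinAt

lemma bfix {c : ℂ} {R : ℝ} (hR : 0 ≤ R) {T : ℂ → ℂ}
    (hmaps : MapsTo T (closedBall c R) (closedBall c R))
    (hlip : ∀ x ∈ closedBall c R, ∀ y ∈ closedBall c R,
      dist (T x) (T y) ≤ (1/2) * dist x y) :
    ∃ z ∈ closedBall c R, T z = z := by
  have hcompl : IsComplete (closedBall c R) := (isClosed_closedBall (x := c) (ε := R)).isComplete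
  have hlip' : LipschitzOnWith (1/2 : ℝ≥0) T (closedBall c R) := by
    rw [lipschitzOnWith_iff_dist_le_mul]
    intro x hx y hy
    simpa using hlip x hx y hy
  have hcw : ContractingWith (1/2 : ℝ≥0) (hmaps.restrict T _ _) :=
    ⟨by rw [← NNReal.coe_lt_coe]; norm_num, hlip'.mapsToRestrict hmaps⟩
  obtain ⟨y, hy, hfy, -⟩ := hcw.exists_fixedPoint' hcompl hmaps
    (mem_closedBall_self hR) (edist_ne_top _ _)
  exact ⟨y, hy, hfy⟩

/-- The vertical strip `S_n = {λ ∈ ℂ : |Re λ − n²π²| ≤ 12n}`. -/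
def strip (n : ℕ) : Set ℂ :=
  {lam : ℂ | |lam.re - (n : ℝ) ^ 2 * Real.pi ^ 2| ≤ 12 * n}

set_option maxHeartbeats 1000000 in
/-- Rouché-type lemma: under the stated bounds on the analytic functions `a, b⁺, b⁻` on the
strip `S_n`, the function `χ(λ) = (λ − n²π² − a(λ))² − b⁺(λ)b⁻(λ)` has exactly two zeros in
`S_n` counted with multiplicity (expressed by a factorization `χ = (λ−ξ₁)(λ−ξ₂)h` with `h`
analytic and nonvanishing on a neighborhood of `S_n`); both zeros lie in the disc
`D_n = {|λ − n²π²| ≤ 4√n}` and `|ξ₁ − ξ₂| ≤ √6 · sup_{λ∈S_n} |b⁺(λ)b⁻(λ)|^{1/2}`. -/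
theorem stmt_18 (s : ℝ) (hs₁ : -(1 / 2) < s) (hs₂ : s ≤ 0) (n : ℕ) (hn : 1 ≤ n)
    (K : ℝ) (hK : 0 < K) (hKn : 2 * K ≤ (n : ℝ) ^ ((1 : ℝ) / 2 - |s|))
    (V : Set ℂ) (hV : IsOpen V) (hSV : strip n ⊆ V)
    (a bp bm : ℂ → ℂ)
    (ha : AnalyticOnNhd ℂ a V) (hbp : AnalyticOnNhd ℂ bp V) (hbm : AnalyticOnNhd ℂ bm V)
    (haK : ∀ lam ∈ strip n, ‖a lam‖ ≤ K)
    (hbpK : ∀ lam ∈ strip n, (1 + 2 * (n : ℝ)) ^ s * ‖bp lam‖ ≤ 2 * K)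
    (hbmK : ∀ lam ∈ strip n, (1 + 2 * (n : ℝ)) ^ s * ‖bm lam‖ ≤ 2 * K) :
    ∃ ξ₁ ξ₂ : ℂ,
      ξ₁ ∈ Metric.closedBall ((n : ℂ) ^ 2 * (Real.pi : ℂ) ^ 2) (4 * (n : ℝ) ^ ((1 : ℝ) / 2)) ∧
      ξ₂ ∈ Metric.closedBall ((n : ℂ) ^ 2 * (Real.pi : ℂ) ^ 2) (4 * (n : ℝ) ^ ((1 : ℝ) / 2)) ∧
      (∃ W : Set ℂ, IsOpen W ∧ strip n ⊆ W ∧ W ⊆ V ∧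
        ∃ h : ℂ → ℂ, AnalyticOnNhd ℂ h W ∧ (∀ lam ∈ W, h lam ≠ 0) ∧
          ∀ lam ∈ W,
            (lam - (n : ℂ) ^ 2 * (Real.pi : ℂ) ^ 2 - a lam) ^ 2 - bp lam * bm lam
              = (lam - ξ₁) * (lam - ξ₂) * h lam) ∧
      ∀ B : ℝ, (∀ lam ∈ strip n, Real.sqrt (‖bp lam * bm lam‖) ≤ B) →
        ‖ξ₁ - ξ₂‖ ≤ Real.sqrt 6 * B := by
  -- ### basic real constants
  set N : ℝ := (n : ℝ) with hN
  have hN1 : (1 : ℝ) ≤ N := by rw [hN]; exact_mod_cast hn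
  have hN0 : (0 : ℝ) < N := by linarith
  set r : ℝ := Real.sqrt N with hr
  have hr1 : (1 : ℝ) ≤ r := by
    rw [hr, show (1:ℝ) = Real.sqrt 1 by simp]; exact Real.sqrt_le_sqrt hN1
  have hr0 : (0 : ℝ) < r := by linarith
  have hrr : r * r = N := Real.mul_self_sqrt hN0.le
  have hrN : r ≤ N := by nlinarith
  -- K ≤ r/2
  have habs : |s| = -s := abs_of_nonpos hs₂
  have hKr : 2 * K ≤ r := by
    refine hKn.trans ?_
    have : (N : ℝ) ^ ((1:ℝ)/2 - |s|) ≤ N ^ ((1:ℝ)/2) :=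
      Real.rpow_le_rpow_of_exponent_le hN1 (by linarith [abs_nonneg s])
    rw [← Real.sqrt_eq_rpow] at this
    exact this
  have hKr' : K ≤ r / 2 := by linarith
  have hKN : K ≤ N / 2 := by nlinarith
  -- ### the center μ
  set μ : ℂ := ((n : ℂ) ^ 2 * (Real.pi : ℂ) ^ 2) with hμ
  have hμre : μ.re = N ^ 2 * Real.pi ^ 2 := by
    rw [hμ]; norm_cast; push_cast; ring
  have hμim : μ.im = 0 := by rw [hμ]; norm_cast
  -- membership in the strip from distance to μ
  have hball_strip : ∀ ρ : ℝ, ρ ≤ 12 * N → closedBall μ ρ ⊆ strip n := by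
    intro ρ hρ z hz
    rw [mem_closedBall, Complex.dist_eq] at hz
    have h1 : |(z - μ).re| ≤ ‖z - μ‖ := Complex.abs_re_le_norm _
    have h2 : (z - μ).re = z.re - N ^ 2 * Real.pi ^ 2 := by
      rw [Complex.sub_re, hμre]
    simp only [strip, mem_setOf_eq]
    rw [← h2]
    calc |(z - μ).re| ≤ ‖z - μ‖ := h1
      _ ≤ ρ := hz
      _ ≤ 12 * N := hρ
  -- the regions
  have hR4strip : closedBall μ (4*r) ⊆ strip n := by
    refine (closedBall_subset_closedBall ?_).trans (hball_strip (12*N) le_rfl)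
    nlinarith
  have hR6strip : closedBall μ (6*N) ⊆ strip n := by
    refine (closedBall_subset_closedBall ?_).trans (hball_strip (12*N) le_rfl)
    nlinarith
  have hR34 : closedBall μ (3*r) ⊆ closedBall μ (4*r) :=
    closedBall_subset_closedBall (by nlinarith)
  have hR46 : closedBall μ (4*r) ⊆ closedBall μ (6*N) :=
    closedBall_subset_closedBall (by nlinarith)
  -- ### bound on g = bp * bm
  set g : ℂ → ℂ := fun z => bp z * bm z with hgdef
  have hg : AnalyticOnNhd ℂ g V := hbp.mul hbm
  have hg3 : ∀ z ∈ strip n, ‖g z‖ ≤ 3 * N := by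
    intro z hz
    have hb : (0:ℝ) < (1 + 2 * N) := by linarith
    have hbs : (0:ℝ) < (1 + 2 * N) ^ s := Real.rpow_pos_of_pos hb s
    have h1 : ‖bp z‖ ≤ 2 * K * (1 + 2*N) ^ (-s) := by
      rw [Real.rpow_neg hb.le, ← div_eq_mul_inv]
      exact (le_div_iff₀ hbs).mpr (by rw [mul_comm]; exact hbpK z hz)
    have h2 : ‖bm z‖ ≤ 2 * K * (1 + 2*N) ^ (-s) := by
      rw [Real.rpow_neg hb.le, ← div_eq_mul_inv]
      exact (le_div_iff₀ hbs).mpr (by rw [mul_comm]; exact hbmK z hz)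
    have hgabs : ‖g z‖ ≤ (2*K*(1+2*N)^(-s)) * (2*K*(1+2*N)^(-s)) := by
      rw [hgdef]
      simp only [norm_mul]
      exact mul_le_mul h1 h2 (by positivity) (by positivity)
    refine hgabs.trans ?_
    have he : (-s) = |s| := habs.symm
    rw [he]
    have step1 : (2*K*(1+2*N)^(|s|)) * (2*K*(1+2*N)^(|s|))
        = (2*K)*(2*K) * ((1+2*N)^(|s|) * (1+2*N)^(|s|)) := by ring
    rw [step1]
    have h2K : (2*K)*(2*K) ≤ N ^ ((1:ℝ) - 2*|s|) := by
      have h0 : (0:ℝ) ≤ 2*K := by linarith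
      calc (2*K)*(2*K) ≤ N ^ ((1:ℝ)/2 - |s|) * N ^ ((1:ℝ)/2 - |s|) :=
            mul_le_mul hKn hKn h0 (by positivity)
        _ = N ^ ((1:ℝ)/2 - |s| + ((1:ℝ)/2 - |s|)) := (Real.rpow_add hN0 _ _).symm
        _ = N ^ ((1:ℝ) - 2*|s|) := by ring_nf
    have h3N : (1+2*N)^(|s|) * (1+2*N)^(|s|) ≤ (3*N) ^ (2*|s|) := by
      have hb3 : (1+2*N : ℝ) ≤ 3*N := by linarith
      have : ((1+2*N:ℝ))^(|s|) ≤ (3*N)^(|s|) :=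
        Real.rpow_le_rpow (by linarith) hb3 (abs_nonneg s)
      calc (1+2*N)^(|s|) * (1+2*N)^(|s|) ≤ (3*N)^(|s|) * (3*N)^(|s|) :=
            mul_le_mul this this (by positivity) (by positivity)
        _ = (3*N) ^ (|s| + |s|) := (Real.rpow_add (by linarith) _ _).symm
        _ = (3*N) ^ (2*|s|) := by ring_nf
    calc (2*K)*(2*K) * ((1+2*N)^(|s|) * (1+2*N)^(|s|))
        ≤ N ^ ((1:ℝ) - 2*|s|) * (3*N) ^ (2*|s|) := by
          apply mul_le_mul h2K h3N (by positivity) (by positivity)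
      _ = N ^ ((1:ℝ) - 2*|s|) * (3 ^ (2*|s|) * N ^ (2*|s|)) := by
          rw [Real.mul_rpow (by norm_num) hN0.le]
      _ = (N ^ ((1:ℝ) - 2*|s|) * N ^ (2*|s|)) * 3 ^ (2*|s|) := by ring
      _ = N * 3 ^ (2*|s|) := by
          rw [← Real.rpow_add hN0]; norm_num
      _ ≤ N * 3 := by
          have h2s : 2*|s| ≤ 1 := by rw [habs]; linarith
          have : (3:ℝ) ^ (2*|s|) ≤ 3 ^ (1:ℝ) :=
            Real.rpow_le_rpow_of_exponent_le (by norm_num) h2s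
          simpa using mul_le_mul_of_nonneg_left (this.trans_eq (by norm_num)) hN0.le
      _ = 3 * N := by ring
  -- ### the functions f and χ
  set f : ℂ → ℂ := fun z => z - μ - a z with hfdef
  set χ : ℂ → ℂ := fun z => (f z) ^ 2 - g z with hχdef
  have hχA : AnalyticOnNhd ℂ χ V :=
    (((analyticOnNhd_id.sub analyticOnNhd_const).sub ha).pow 2).sub hg
  have hfA : AnalyticOnNhd ℂ f V := (analyticOnNhd_id.sub analyticOnNhd_const).sub ha
  -- location of zeros of χ in the strip
  have hzloc : ∀ z ∈ strip n, χ z = 0 → z ∈ closedBall μ ((9/4) * r) := by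
    intro z hz h0
    have hfg : (f z) ^ 2 = g z := by
      have := sub_eq_zero.mp h0
      simpa [hχdef] using this
    have habs2 : (‖f z‖) ^ 2 ≤ 3 * N := by
      have : ‖(f z) ^ 2‖ = (‖f z‖)^2 := by simp
      rw [← this, hfg]; exact hg3 z hz
    have hfz : ‖f z‖ ≤ (7/4) * r := by
      have h1 : ‖f z‖ ≤ Real.sqrt (3*N) :=
        (Real.le_sqrt (norm_nonneg _) (by positivity)).mpr habs2
      refine h1.trans ?_
      rw [Real.sqrt_mul (by norm_num : (0:ℝ) ≤ 3) N, ← hr]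
      have h2 : Real.sqrt 3 ≤ 7/4 := by
        rw [show (7/4:ℝ) = Real.sqrt ((7/4)^2) by rw [Real.sqrt_sq]; norm_num]
        exact Real.sqrt_le_sqrt (by norm_num)
      nlinarith [hr0.le]
    have hsplit : z - μ = f z + a z := by rw [hfdef]; ring
    rw [mem_closedBall, Complex.dist_eq, hsplit]
    calc ‖f z + a z‖ ≤ ‖f z‖ + ‖a z‖ :=
          norm_add_le _ _
      _ ≤ (7/4) * r + K := by linarith [haK z hz]
      _ ≤ (9/4) * r := by linarith
  -- ### Cauchy derivative bounds
  have hsub84 : ∀ x ∈ closedBall μ (4*r), closedBall x (8*N) ⊆ strip n := by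
    intro x hx
    intro z hz
    apply hball_strip (12*N) le_rfl
    rw [mem_closedBall] at *
    calc dist z μ ≤ dist z x + dist x μ := dist_triangle _ _ _
      _ ≤ 8*N + 4*r := add_le_add hz hx
      _ ≤ 12*N := by nlinarith
  have hsub66 : ∀ x ∈ closedBall μ (6*N), closedBall x (6*N) ⊆ strip n := by
    intro x hx z hz
    apply hball_strip (12*N) le_rfl
    rw [mem_closedBall] at *
    calc dist z μ ≤ dist z x + dist x μ := dist_triangle _ _ _
      _ ≤ 6*N + 6*N := add_le_add hz hx
      _ ≤ 12*N := by nlinarith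
  have hsub26 : ∀ x ∈ closedBall μ (4*r), closedBall x (2*N) ⊆ closedBall μ (6*N) := by
    intro x hx z hz
    rw [mem_closedBall] at *
    calc dist z μ ≤ dist z x + dist x μ := dist_triangle _ _ _
      _ ≤ 2*N + 4*r := add_le_add hz hx
      _ ≤ 6*N := by nlinarith
  have hda4 : ∀ x ∈ closedBall μ (4*r), ‖deriv a x‖ ≤ K / (8*N) := by
    intro x hx
    have := cauchy_deriv_bound' ha (c := x) (R := 8*N) (C := K) (by positivity)
      ((hsub84 x hx).trans hSV)
      (fun z hz => by
        exact haK z (hsub84 x hx (sphere_subset_closedBall hz)))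
    exact this
  have hda6 : ∀ x ∈ closedBall μ (6*N), ‖deriv a x‖ ≤ K / (6*N) := by
    intro x hx
    have := cauchy_deriv_bound' ha (c := x) (R := 6*N) (C := K) (by positivity)
      ((hsub66 x hx).trans hSV)
      (fun z hz => by
        exact haK z (hsub66 x hx (sphere_subset_closedBall hz)))
    exact this
  have hdg6 : ∀ x ∈ closedBall μ (6*N), ‖deriv g x‖ ≤ 1/2 := by
    intro x hx
    have := cauchy_deriv_bound' hg (c := x) (R := 6*N) (C := 3*N) (by positivity)
      ((hsub66 x hx).trans hSV)
      (fun z hz => by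
        exact hg3 z (hsub66 x hx (sphere_subset_closedBall hz)))
    refine this.trans ?_
    rw [div_le_div_iff₀ (by positivity) (by norm_num)]
    nlinarith
  -- Lipschitz bounds
  have hdiffa : ∀ x ∈ closedBall μ (6*N), DifferentiableAt ℂ a x :=
    fun x hx => (ha x (hSV (hR6strip hx))).differentiableAt
  have hdiffg : ∀ x ∈ closedBall μ (6*N), DifferentiableAt ℂ g x :=
    fun x hx => (hg x (hSV (hR6strip hx))).differentiableAt
  have hLipA4 : ∀ x ∈ closedBall μ (4*r), ∀ y ∈ closedBall μ (4*r),
      ‖a y - a x‖ ≤ K/(8*N) * ‖y - x‖ := by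
    intro x hx y hy
    have := (convex_closedBall μ (4*r)).norm_image_sub_le_of_norm_deriv_le
      (fun w hw => hdiffa w (hR46 hw))
      (fun w hw => by exact hda4 w hw) hx hy
    simpa using this
  have hLipA6 : ∀ x ∈ closedBall μ (6*N), ∀ y ∈ closedBall μ (6*N),
      ‖a y - a x‖ ≤ K/(6*N) * ‖y - x‖ := by
    intro x hx y hy
    have := (convex_closedBall μ (6*N)).norm_image_sub_le_of_norm_deriv_le
      hdiffa (fun w hw => by exact hda6 w hw) hx hy
    simpa using this
  have hLipG6 : ∀ x ∈ closedBall μ (6*N), ∀ y ∈ closedBall μ (6*N),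
      ‖g y - g x‖ ≤ 1/2 * ‖y - x‖ := by
    intro x hx y hy
    have := (convex_closedBall μ (6*N)).norm_image_sub_le_of_norm_deriv_le
      hdiffg (fun w hw => by exact hdg6 w hw) hx hy
    simpa using this
  -- ### a zero λ* of f
  have hKcb4 : closedBall μ K ⊆ closedBall μ (4*r) :=
    closedBall_subset_closedBall (by linarith)
  obtain ⟨lamS, hlamS, hlamSfix⟩ : ∃ z ∈ closedBall μ K, μ + a z = z := by
    apply bfix hK.le
    · intro z hz
      rw [mem_closedBall, Complex.dist_eq]
      have hzs : z ∈ strip n := hball_strip (12*N) le_rfl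
        ((closedBall_subset_closedBall (by nlinarith)) hz)
      simpa using haK z hzs
    · intro x hx y hy
      rw [Complex.dist_eq, Complex.dist_eq]
      have h1 : (μ + a x) - (μ + a y) = a x - a y := by ring
      rw [h1]
      calc ‖a x - a y‖ ≤ K/(8*N) * ‖x - y‖ :=
            hLipA4 y (hKcb4 hy) x (hKcb4 hx)
        _ ≤ 1/2 * ‖x - y‖ := by
            apply mul_le_mul_of_nonneg_right _ (norm_nonneg _)
            rw [div_le_div_iff₀ (by positivity) (by norm_num)]
            nlinarith
  have hflamS : f lamS = 0 := by
    simp only [hfdef]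
    linear_combination -hlamSfix
  have hlamS3r : lamS ∈ closedBall μ (3*r) :=
    (closedBall_subset_closedBall (by linarith)) hlamS
  have hlamSstrip : lamS ∈ strip n :=
    hR4strip (hR34 hlamS3r)
  have hχlamS : ‖χ lamS‖ ≤ 3 * N := by
    have : χ lamS = - g lamS := by simp only [hχdef]; rw [hflamS]; ring
    rw [this, norm_neg]
    exact hg3 lamS hlamSstrip
  -- ### existence of the first zero ξ₁
  obtain ⟨ξ₁, hξ₁3r, hχξ₁⟩ : ∃ z ∈ closedBall μ (3*r), χ z = 0 := by
    by_contra hcon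
    push_neg at hcon
    have h3r0 : (0:ℝ) < 3*r := by positivity
    have hsubstrip : closedBall μ (3*r) ⊆ strip n :=
      (closedBall_subset_closedBall (by nlinarith)).trans (hball_strip (12*N) le_rfl)
    have hmin : ∀ z ∈ sphere μ (3*r), ‖(χ z)⁻¹‖ ≤ ((13/4)*N)⁻¹ := by
      intro z hz
      have hzs : z ∈ strip n := hsubstrip (sphere_subset_closedBall hz)
      have hzd : ‖z - μ‖ = 3*r := by
        rw [mem_sphere, Complex.dist_eq] at hz; exact hz
      have hfz : (5/2)*r ≤ ‖f z‖ := by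
        have hsplit : z - μ = f z + a z := by rw [hfdef]; ring
        have := norm_add_le (f z) (a z)
        rw [← hsplit, hzd] at this
        linarith [haK z hzs]
      have hχz : (13/4)*N ≤ ‖χ z‖ := by
        have h1 : ‖(f z)^2‖ = (‖f z‖)^2 := by simp
        have h2 : ‖(f z)^2‖ ≤ ‖χ z‖ + ‖g z‖ := by
          calc ‖(f z)^2‖ = ‖χ z + g z‖ := by rw [hχdef]; ring_nf
            _ ≤ ‖χ z‖ + ‖g z‖ := norm_add_le _ _
        have h3 := hg3 z hzs
        nlinarith [hrr, norm_nonneg (f z)]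
      rw [norm_inv]
      exact inv_anti₀ (by positivity) hχz
    have hd : DiffContOnCl ℂ (fun z => (χ z)⁻¹) (ball μ (3*r)) := by
      constructor
      · intro z hz
        exact ((hχA z (hSV (hsubstrip (ball_subset_closedBall hz)))).differentiableAt.inv
          (hcon z (ball_subset_closedBall hz))).differentiableWithinAt
      · rw [closure_ball μ h3r0.ne']
        exact ((hχA.continuousOn).mono (hsubstrip.trans hSV)).inv₀ hcon
    have hfr : ∀ z ∈ frontier (ball μ (3*r)), ‖(χ z)⁻¹‖ ≤ ((13/4)*N)⁻¹ := by
      rw [frontier_ball μ h3r0.ne']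
      exact hmin
    have hlam : lamS ∈ closure (ball μ (3*r)) := by
      rw [closure_ball μ h3r0.ne']
      exact hlamS3r
    have := Complex.norm_le_of_forall_mem_frontier_norm_le isBounded_ball hd hfr hlam
    rw [norm_inv] at this
    have hne : χ lamS ≠ 0 := hcon lamS hlamS3r
    have hpos : 0 < ‖χ lamS‖ := by
      simpa [norm_pos_iff] using hne
    have h13 : (13/4)*N ≤ ‖χ lamS‖ := by
      rwa [inv_le_inv₀ hpos (by positivity)] at this
    linarith
  -- ### the first zero and dslope functions
  have hξ₁strip : ξ₁ ∈ strip n := hR4strip (hR34 hξ₁3r)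
  have hξ₁ball : ξ₁ ∈ closedBall μ ((9/4) * r) := hzloc ξ₁ hξ₁strip hχξ₁
  have hξ₁R4 : ξ₁ ∈ closedBall μ (4*r) := hR34 hξ₁3r
  have hξ₁R6 : ξ₁ ∈ closedBall μ (6*N) := hR46 hξ₁R4
  have hξ₁V : ξ₁ ∈ V := hSV hξ₁strip
  set Δa : ℂ → ℂ := dslope a ξ₁ with hΔadef
  set Δv : ℂ → ℂ := dslope g ξ₁ with hΔvdef
  have hΔaA : AnalyticOnNhd ℂ Δa V := analyticOnNhd_dslope' ha hξ₁V
  have hΔvA : AnalyticOnNhd ℂ Δv V := analyticOnNhd_dslope' hg hξ₁V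
  have hΔa6 : ∀ x ∈ closedBall μ (6*N), ‖Δa x‖ ≤ K/(6*N) := by
    intro x hx
    rcases eq_or_ne x ξ₁ with rfl | hne
    · rw [hΔadef, dslope_same]; exact hda6 x hx
    · rw [hΔadef, dslope_of_ne _ hne, slope_def_field, norm_div]
      rw [div_le_iff₀ (by simpa [norm_pos_iff] using sub_ne_zero.mpr hne)]
      exact hLipA6 ξ₁ hξ₁R6 x hx
  have hΔv6 : ∀ x ∈ closedBall μ (6*N), ‖Δv x‖ ≤ 1/2 := by
    intro x hx
    rcases eq_or_ne x ξ₁ with rfl | hne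
    · rw [hΔvdef, dslope_same]; exact hdg6 x hx
    · rw [hΔvdef, dslope_of_ne _ hne, slope_def_field, norm_div]
      rw [div_le_iff₀ (by simpa [norm_pos_iff] using sub_ne_zero.mpr hne)]
      exact hLipG6 ξ₁ hξ₁R6 x hx
  have hΔa'4 : ∀ x ∈ closedBall μ (4*r), ‖deriv Δa x‖ ≤ 1/24 := by
    intro x hx
    have := cauchy_deriv_bound' hΔaA (c := x) (R := 2*N) (C := K/(6*N)) (by positivity)
      (((hsub26 x hx).trans hR6strip).trans hSV)
      (fun z hz => by
        exact hΔa6 z (hsub26 x hx (sphere_subset_closedBall hz)))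
    refine this.trans ?_
    rw [div_div, div_le_div_iff₀ (by positivity) (by norm_num)]
    nlinarith
  have hΔv'4 : ∀ x ∈ closedBall μ (4*r), ‖deriv Δv x‖ ≤ 1/4 := by
    intro x hx
    have := cauchy_deriv_bound' hΔvA (c := x) (R := 2*N) (C := 1/2) (by positivity)
      (((hsub26 x hx).trans hR6strip).trans hSV)
      (fun z hz => by
        exact hΔv6 z (hsub26 x hx (sphere_subset_closedBall hz)))
    refine this.trans ?_
    rw [div_div, div_le_div_iff₀ (by positivity) (by norm_num)]
    nlinarith
  have hden : ∀ x ∈ closedBall μ (6*N), (11/12:ℝ) ≤ ‖1 - Δa x‖ := by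
    intro x hx
    have h1 : ‖(1 : ℂ)‖ ≤ ‖1 - Δa x‖ + ‖Δa x‖ := by
      calc ‖(1:ℂ)‖ = ‖(1 - Δa x) + Δa x‖ := by ring_nf
        _ ≤ _ := norm_add_le _ _
    have h2 : ‖Δa x‖ ≤ 1/12 := by
      refine (hΔa6 x hx).trans ?_
      rw [div_le_div_iff₀ (by positivity) (by norm_num)]
      nlinarith
    simp only [norm_one] at h1
    linarith
  have hden0 : ∀ x ∈ closedBall μ (6*N), (1:ℂ) - Δa x ≠ 0 := by
    intro x hx h0
    have := hden x hx
    rw [h0] at this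
    simp at this
    linarith
  -- ### the contraction T
  set T : ℂ → ℂ := fun z => 2*μ - ξ₁ + a z + a ξ₁ + Δv z * (1 - Δa z)⁻¹ with hTdef
  have habsμξ : ‖μ - ξ₁‖ ≤ (9/4)*r := by
    rw [mem_closedBall, Complex.dist_eq] at hξ₁ball
    calc ‖μ - ξ₁‖ = ‖-(ξ₁ - μ)‖ := by ring_nf
      _ = ‖ξ₁ - μ‖ := norm_neg _
      _ ≤ (9/4)*r := hξ₁ball
  have hinvbound : ∀ x ∈ closedBall μ (6*N), ‖(1 - Δa x)⁻¹‖ ≤ 12/11 := by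
    intro x hx
    rw [norm_inv]
    have h0 : (0:ℝ) < ‖1 - Δa x‖ := lt_of_lt_of_le (by norm_num) (hden x hx)
    rw [inv_le_comm₀ h0 (by norm_num)]
    calc ((12:ℝ)/11)⁻¹ = 11/12 := by norm_num
      _ ≤ _ := hden x hx
  have hTmaps : MapsTo T (closedBall μ (4*r)) (closedBall μ (4*r)) := by
    intro z hz
    have hz6 : z ∈ closedBall μ (6*N) := hR46 hz
    have hzs : z ∈ strip n := hR4strip hz
    rw [mem_closedBall, Complex.dist_eq]
    have hTz : T z - μ = (μ - ξ₁) + a z + a ξ₁ + Δv z * (1 - Δa z)⁻¹ := by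
      rw [hTdef]; ring
    rw [hTz]
    calc ‖(μ - ξ₁) + a z + a ξ₁ + Δv z * (1 - Δa z)⁻¹‖
        ≤ ‖(μ - ξ₁) + a z + a ξ₁‖ + ‖Δv z * (1 - Δa z)⁻¹‖ :=
          norm_add_le _ _
      _ ≤ (‖(μ - ξ₁) + a z‖ + ‖a ξ₁‖)
            + ‖Δv z‖ * ‖(1 - Δa z)⁻¹‖ := by
          rw [norm_mul]
          exact add_le_add (norm_add_le _ _) le_rfl
      _ ≤ ((‖μ - ξ₁‖ + ‖a z‖) + ‖a ξ₁‖)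
            + ‖Δv z‖ * ‖(1 - Δa z)⁻¹‖ := by
          exact add_le_add (add_le_add (norm_add_le _ _) le_rfl) le_rfl
      _ ≤ (((9/4)*r + K) + K) + (1/2) * (12/11) := by
          refine add_le_add (add_le_add (add_le_add habsμξ (haK z hzs)) (haK ξ₁ hξ₁strip)) ?_
          exact mul_le_mul (hΔv6 z hz6) (hinvbound z hz6) (norm_nonneg _) (by norm_num)
      _ ≤ 4*r := by nlinarith
  -- derivative of T
  set T' : ℂ → ℂ := fun x =>
    deriv a x + (deriv Δv x * (1 - Δa x)⁻¹
      + Δv x * (-(0 - deriv Δa x) / (1 - Δa x) ^ 2)) with hT'def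
  have hTd : ∀ x ∈ closedBall μ (4*r), HasDerivAt T (T' x) x := by
    intro x hx
    have hx6 : x ∈ closedBall μ (6*N) := hR46 hx
    have hxV : x ∈ V := hSV (hR4strip hx)
    have ha' : HasDerivAt a (deriv a x) x := (ha x hxV).differentiableAt.hasDerivAt
    have hv' : HasDerivAt Δv (deriv Δv x) x := (hΔvA x hxV).differentiableAt.hasDerivAt
    have haa' : HasDerivAt Δa (deriv Δa x) x := (hΔaA x hxV).differentiableAt.hasDerivAt
    have hinner : HasDerivAt (fun z => (1:ℂ) - Δa z) (0 - deriv Δa x) x :=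
      (hasDerivAt_const x (1:ℂ)).sub haa'
    have hinv : HasDerivAt (fun z => ((1:ℂ) - Δa z)⁻¹)
        (-(0 - deriv Δa x) / ((1:ℂ) - Δa x) ^ 2) x := hinner.inv (hden0 x hx6)
    have hmul : HasDerivAt (fun z => Δv z * ((1:ℂ) - Δa z)⁻¹)
        (deriv Δv x * ((1:ℂ) - Δa x)⁻¹ + Δv x * (-(0 - deriv Δa x) / ((1:ℂ) - Δa x) ^ 2)) x :=
      hv'.mul hinv
    have h1 : HasDerivAt (fun z => 2*μ - ξ₁ + a z) (0 + deriv a x) x :=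
      (hasDerivAt_const x (2*μ - ξ₁)).add ha'
    have h2 : HasDerivAt (fun z => 2*μ - ξ₁ + a z + a ξ₁) (0 + deriv a x) x :=
      h1.add_const (a ξ₁)
    have h3 := h2.add hmul
    rw [hTdef, hT'def]
    exact h3.congr_deriv (by simp only [zero_add])
  have hT'bound : ∀ x ∈ closedBall μ (4*r), ‖T' x‖ ≤ 1/2 := by
    intro x hx
    have hx6 : x ∈ closedBall μ (6*N) := hR46 hx
    have ea : ‖deriv a x‖ ≤ 1/16 := by
      refine (hda4 x hx).trans ?_
      rw [div_le_div_iff₀ (by positivity) (by norm_num)]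
      nlinarith
    have einv2 : ‖(((1:ℂ) - Δa x) ^ 2)⁻¹‖ ≤ (12/11)^2 := by
      rw [norm_inv, norm_pow]
      have h0 : (0:ℝ) < ‖1 - Δa x‖ := lt_of_lt_of_le (by norm_num) (hden x hx6)
      rw [inv_le_comm₀ (by positivity) (by norm_num)]
      have h1 : ((12:ℝ)/11)⁻¹ ^ 2 ≤ ‖1 - Δa x‖ ^ 2 := by
        apply pow_le_pow_left₀ (by norm_num)
        rw [show ((12:ℝ)/11)⁻¹ = 11/12 by norm_num]
        exact hden x hx6
      calc (((12:ℝ)/11) ^ 2)⁻¹ = ((12:ℝ)/11)⁻¹ ^ 2 := by rw [inv_pow]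
        _ ≤ _ := h1
    rw [hT'def]
    calc ‖deriv a x + (deriv Δv x * (1 - Δa x)⁻¹
          + Δv x * (-(0 - deriv Δa x) / (1 - Δa x) ^ 2))‖
        ≤ ‖deriv a x‖ + ‖deriv Δv x * (1 - Δa x)⁻¹
            + Δv x * (-(0 - deriv Δa x) / (1 - Δa x) ^ 2)‖ := norm_add_le _ _
      _ ≤ ‖deriv a x‖ + (‖deriv Δv x * (1 - Δa x)⁻¹‖
            + ‖Δv x * (-(0 - deriv Δa x) / (1 - Δa x) ^ 2)‖) :=
          add_le_add le_rfl (norm_add_le _ _)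
      _ = ‖deriv a x‖ + (‖deriv Δv x‖ * ‖(1 - Δa x)⁻¹‖
            + ‖Δv x‖ * (‖deriv Δa x‖ * ‖((1 - Δa x) ^ 2)⁻¹‖)) := by
          rw [norm_mul, norm_mul]
          congr 2
          rw [div_eq_mul_inv, norm_mul]
          congr 1
          rw [show -(0 - deriv Δa x) = deriv Δa x by ring]
      _ ≤ 1/16 + ((1/4) * (12/11) + (1/2) * ((1/24) * (12/11)^2)) := by
          refine add_le_add ea (add_le_add ?_ ?_)
          · exact mul_le_mul (hΔv'4 x hx) (hinvbound x hx6) (norm_nonneg _) (by norm_num)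
          · refine mul_le_mul (hΔv6 x hx6) ?_ (by positivity) (by norm_num)
            exact mul_le_mul (hΔa'4 x hx) einv2 (norm_nonneg _) (by norm_num)
      _ ≤ 1/2 := by norm_num
  have hTlip : ∀ x ∈ closedBall μ (4*r), ∀ y ∈ closedBall μ (4*r),
      dist (T x) (T y) ≤ 1/2 * dist x y := by
    intro x hx y hy
    have := (convex_closedBall μ (4*r)).norm_image_sub_le_of_norm_hasDerivWithin_le
      (f' := T') (fun w hw => (hTd w hw).hasDerivWithinAt)
      (fun w hw => by exact hT'bound w hw) hy hx
    rw [Complex.dist_eq, Complex.dist_eq]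
    simpa using this
  obtain ⟨ξ₂, hξ₂R4, hTξ₂⟩ : ∃ z ∈ closedBall μ (4*r), T z = z :=
    bfix (by positivity) hTmaps hTlip
  have hTuniq : ∀ w ∈ closedBall μ (4*r), T w = w → w = ξ₂ := by
    intro w hw hfix
    have h1 := hTlip w hw ξ₂ hξ₂R4
    rw [hfix, hTξ₂] at h1
    have h2 : dist w ξ₂ = 0 := by linarith [dist_nonneg (x := w) (y := ξ₂)]
    exact dist_eq_zero.mp h2
  -- ### the divided function χ₁ and the key identity
  set χ₁ : ℂ → ℂ := dslope χ ξ₁ with hχ₁def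
  have hχ₁A : AnalyticOnNhd ℂ χ₁ V := analyticOnNhd_dslope' hχA hξ₁V
  have hgξ₁ : g ξ₁ = (ξ₁ - μ - a ξ₁)^2 := by
    have h0 : (f ξ₁)^2 - g ξ₁ = 0 := by
      have := hχξ₁
      simpa [hχdef] using this
    have h1 := sub_eq_zero.mp h0
    rw [← h1]
  have hidne : ∀ x ∈ closedBall μ (6*N), x ≠ ξ₁ → χ₁ x = (x - T x) * (1 - Δa x) := by
    intro x hx hne
    have hd : x - ξ₁ ≠ 0 := sub_ne_zero.mpr hne
    have hD : (1:ℂ) - (a x - a ξ₁)/(x - ξ₁) ≠ 0 := by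
      have := hden0 x hx
      rwa [hΔadef, dslope_of_ne _ hne, slope_def_field] at this
    rw [hχ₁def, dslope_of_ne _ hne, slope_def_field, hχξ₁, hTdef]
    simp only [hΔadef, hΔvdef, dslope_of_ne _ hne, slope_def_field, hχdef, hfdef]
    rw [hgξ₁]
    have hDd : x - ξ₁ - (a x - a ξ₁) ≠ 0 := by
      have h2 : (x - ξ₁) * ((1:ℂ) - (a x - a ξ₁)/(x - ξ₁)) = x - ξ₁ - (a x - a ξ₁) := by
        field_simp
      rw [← h2]
      exact mul_ne_zero hd hD
    field_simp [hd, hDd]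
    ring
  have hξ₁in6 : ξ₁ ∈ ball μ (6*N) := by
    rw [mem_ball]
    rw [mem_closedBall] at hξ₁ball
    have : (9/4:ℝ)*r ≤ (9/4)*N := by linarith [hrN]
    linarith [hξ₁ball, hN0]
  have hid : ∀ x ∈ closedBall μ (6*N), χ₁ x = (x - T x) * (1 - Δa x) := by
    intro x hx
    rcases eq_or_ne x ξ₁ with rfl | hne
    · -- continuity argument at the center
      have hcont1 : ContinuousAt χ₁ x := (hχ₁A x hξ₁V).continuousAt
      have hca : ContinuousAt a x := (ha x hξ₁V).continuousAt
      have hcv : ContinuousAt Δv x := (hΔvA x hξ₁V).continuousAt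
      have hcΔa : ContinuousAt Δa x := (hΔaA x hξ₁V).continuousAt
      have hcT : ContinuousAt T x := by
        rw [hTdef]
        exact ((continuousAt_const.add hca).add continuousAt_const).add
          (hcv.mul ((continuousAt_const.sub hcΔa).inv₀ (hden0 x hx)))
      have hcont2 : ContinuousAt (fun y => (y - T y) * (1 - Δa y)) x :=
        (continuousAt_id.sub hcT).mul (continuousAt_const.sub hcΔa)
      have hev : (fun y => (y - T y) * (1 - Δa y)) =ᶠ[𝓝[≠] x] χ₁ := by
        have hmem : ball μ (6*N) ∈ 𝓝 x := isOpen_ball.mem_nhds hξ₁in6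
        filter_upwards [nhdsWithin_le_nhds hmem, self_mem_nhdsWithin] with y hy hne'
        exact (hidne y (ball_subset_closedBall hy) hne').symm
      have l1 : Filter.Tendsto χ₁ (𝓝[≠] x) (𝓝 (χ₁ x)) :=
        hcont1.tendsto.mono_left nhdsWithin_le_nhds
      have l2 : Filter.Tendsto χ₁ (𝓝[≠] x) (𝓝 ((x - T x) * (1 - Δa x))) :=
        Filter.Tendsto.congr' hev (hcont2.tendsto.mono_left nhdsWithin_le_nhds)
      exact tendsto_nhds_unique l1 l2
    · exact hidne x hx hne
  have hχ₁iff : ∀ x ∈ closedBall μ (6*N), (χ₁ x = 0 ↔ T x = x) := by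
    intro x hx
    rw [hid x hx]
    constructor
    · intro h0
      rcases mul_eq_zero.mp h0 with h | h
      · exact (sub_eq_zero.mp h).symm
      · exact absurd h (hden0 x hx)
    · intro h
      rw [sub_eq_zero.mpr h.symm, zero_mul]
  have hχ₁ξ₂ : χ₁ ξ₂ = 0 := (hχ₁iff ξ₂ (hR46 hξ₂R4)).mpr hTξ₂
  have hsub_dslope : ∀ x : ℂ, χ x = (x - ξ₁) * χ₁ x := by
    intro x
    have h1 := sub_smul_dslope χ ξ₁ x
    rw [hχξ₁, sub_zero] at h1
    rw [← h1, smul_eq_mul, hχ₁def]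
  have hχξ₂ : χ ξ₂ = 0 := by rw [hsub_dslope ξ₂, hχ₁ξ₂, mul_zero]
  have hξ₂strip : ξ₂ ∈ strip n := hR4strip hξ₂R4
  have hξ₂ball : ξ₂ ∈ closedBall μ ((9/4)*r) := hzloc ξ₂ hξ₂strip hχξ₂
  have hξ₂V : ξ₂ ∈ V := hSV hξ₂strip
  have hball94 : closedBall μ ((9/4)*r) ⊆ closedBall μ (4*r) :=
    closedBall_subset_closedBall (by nlinarith)
  -- all zeros of χ in the strip are ξ₁ or ξ₂
  have hzeros : ∀ z ∈ strip n, χ z = 0 → z = ξ₁ ∨ z = ξ₂ := by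
    intro z hz h0
    rcases eq_or_ne z ξ₁ with rfl | hne
    · exact Or.inl rfl
    · right
      have hz4 : z ∈ closedBall μ (4*r) := hball94 (hzloc z hz h0)
      have hχ₁z : χ₁ z = 0 := by
        have h1 := hsub_dslope z
        rw [h0] at h1
        rcases mul_eq_zero.mp h1.symm with h | h
        · exact absurd h (sub_ne_zero.mpr hne)
        · exact h
      exact hTuniq z hz4 ((hχ₁iff z (hR46 hz4)).mp hχ₁z)
  -- ### the unit factor hh
  set hh : ℂ → ℂ := dslope χ₁ ξ₂ with hhdef
  have hhA : AnalyticOnNhd ℂ hh V := analyticOnNhd_dslope' hχ₁A hξ₂V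
  have hsub2 : ∀ x : ℂ, χ₁ x = (x - ξ₂) * hh x := by
    intro x
    have h1 := sub_smul_dslope χ₁ ξ₂ x
    rw [hχ₁ξ₂, sub_zero] at h1
    rw [← h1, smul_eq_mul, hhdef]
  have hfact : ∀ x : ℂ, χ x = (x - ξ₁) * (x - ξ₂) * hh x := by
    intro x
    rw [hsub_dslope x, hsub2 x]
    ring
  -- lower bound for hh on the ball
  have hhlow : ∀ x ∈ closedBall μ (4*r), x ≠ ξ₂ → (11/24:ℝ) ≤ ‖hh x‖ := by
    intro x hx hne
    have hx6 := hR46 hx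
    have hd0 : (0:ℝ) < ‖x - ξ₂‖ := by
      simpa [norm_pos_iff] using sub_ne_zero.mpr hne
    have h3 : ‖T x - T ξ₂‖ ≤ 1/2 * ‖x - ξ₂‖ := by
      have := hTlip x hx ξ₂ hξ₂R4
      rwa [Complex.dist_eq, Complex.dist_eq] at this
    have h1 : 1/2 * ‖x - ξ₂‖ ≤ ‖x - T x‖ := by
      have h2 : x - T x = (x - ξ₂) - (T x - T ξ₂) := by rw [hTξ₂]; ring
      have h4 : ‖x - ξ₂‖ - ‖T x - T ξ₂‖
          ≤ ‖(x - ξ₂) - (T x - T ξ₂)‖ := by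
        simpa using
          norm_sub_norm_le (x - ξ₂) (T x - T ξ₂)
      rw [h2]
      linarith
    have h5 : ‖x - ξ₂‖ * ‖hh x‖ = ‖χ₁ x‖ := by
      rw [hsub2 x, norm_mul]
    have h6 : ‖χ₁ x‖ = ‖x - T x‖ * ‖1 - Δa x‖ := by
      rw [hid x hx6, norm_mul]
    have h7 : (11/24) * ‖x - ξ₂‖ ≤ ‖x - ξ₂‖ * ‖hh x‖ := by
      rw [h5, h6]
      calc (11/24) * ‖x - ξ₂‖
          = (1/2 * ‖x - ξ₂‖) * (11/12) := by ring
        _ ≤ ‖x - T x‖ * ‖1 - Δa x‖ :=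
            mul_le_mul h1 (hden x hx6) (by norm_num) (norm_nonneg _)
    have h8 := h7
    rw [mul_comm (‖x - ξ₂‖) (‖hh x‖)] at h8
    exact le_of_mul_le_mul_right (by linarith [h8]) hd0
  have hξ₂in4 : ξ₂ ∈ ball μ (4*r) := by
    rw [mem_ball]
    rw [mem_closedBall] at hξ₂ball
    linarith [hξ₂ball, hr0]
  have hξ₂low : (11/24:ℝ) ≤ ‖hh ξ₂‖ := by
    have hcont : ContinuousAt hh ξ₂ := (hhA ξ₂ hξ₂V).continuousAt
    have htend : Filter.Tendsto (fun y => ‖hh y‖) (𝓝[≠] ξ₂)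
        (𝓝 (‖hh ξ₂‖)) :=
      (continuous_norm.continuousAt.comp hcont).tendsto.mono_left nhdsWithin_le_nhds
    refine ge_of_tendsto htend ?_
    have hmem : ball μ (4*r) ∈ 𝓝 ξ₂ := isOpen_ball.mem_nhds hξ₂in4
    filter_upwards [nhdsWithin_le_nhds hmem, self_mem_nhdsWithin] with y hy hne'
    exact hhlow y (ball_subset_closedBall hy) hne'
  have hhne4 : ∀ x ∈ closedBall μ (4*r), hh x ≠ 0 := by
    intro x hx
    rcases eq_or_ne x ξ₂ with rfl | hne
    · intro h0
      rw [h0] at hξ₂low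
      simp at hξ₂low
      linarith
    · intro h0
      have := hhlow x hx hne
      rw [h0] at this
      simp at this
      linarith
  -- ### assembling the result
  have hrad : (4:ℝ) * N ^ ((1:ℝ)/2) = 4 * r := by rw [hr, Real.sqrt_eq_rpow]
  have hξ₁in4 : ξ₁ ∈ ball μ (4*r) := by
    rw [mem_ball]
    rw [mem_closedBall] at hξ₁ball
    linarith [hξ₁ball, hr0]
  refine ⟨ξ₁, ξ₂, ?_, ?_, ?_, ?_⟩
  · rw [hrad]; exact hξ₁R4
  · rw [hrad]; exact hξ₂R4
  · -- the open set W and the factorization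
    refine ⟨ball μ (4*r) ∪ {z | z ∈ V ∧ χ z ≠ 0}, ?_, ?_, ?_, hh, ?_, ?_, ?_⟩
    · apply IsOpen.union isOpen_ball
      have hset : {z | z ∈ V ∧ χ z ≠ 0} = V ∩ χ ⁻¹' ({0}ᶜ) := by
        ext z; simp [mem_setOf_eq, mem_inter_iff]
      rw [hset]
      exact hχA.continuousOn.isOpen_inter_preimage hV isOpen_compl_singleton
    · intro z hz
      by_cases h0 : χ z = 0
      · left
        rcases hzeros z hz h0 with rfl | rfl
        · exact hξ₁in4
        · exact hξ₂in4
      · right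
        exact ⟨hSV hz, h0⟩
    · intro z hz
      rcases hz with hz | hz
      · exact hSV (hR4strip (ball_subset_closedBall hz))
      · exact hz.1
    · refine hhA.mono ?_
      intro z hz
      rcases hz with hz | hz
      · exact hSV (hR4strip (ball_subset_closedBall hz))
      · exact hz.1
    · intro lam hlam
      rcases hlam with hlam | hlam
      · exact hhne4 lam (ball_subset_closedBall hlam)
      · intro h0
        apply hlam.2
        rw [hfact lam, h0, mul_zero]
    · intro lam _
      have := hfact lam
      simp only [hχdef, hfdef, hgdef] at this
      exact this
  · -- the distance bound
    intro B hB
    have hμstrip : μ ∈ strip n := by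
      simp only [strip, mem_setOf_eq, hμre]
      simp only [hN, sub_self, abs_zero]
      positivity
    have hB0 : 0 ≤ B := le_trans (Real.sqrt_nonneg _) (hB μ hμstrip)
    have hfB : ∀ z, z ∈ strip n → χ z = 0 → ‖f z‖ ≤ B := by
      intro z hz h0
      have hfg : (f z) ^ 2 = g z := by
        have h0' : (f z)^2 - g z = 0 := by simpa [hχdef] using h0
        exact sub_eq_zero.mp h0'
      have h1 : ‖f z‖ = Real.sqrt (‖g z‖) := by
        rw [← hfg]
        rw [norm_pow]
        rw [Real.sqrt_sq (norm_nonneg _)]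
      rw [h1]
      exact hB z hz
    have hf1 : ‖f ξ₁‖ ≤ B := hfB ξ₁ hξ₁strip hχξ₁
    have hf2 : ‖f ξ₂‖ ≤ B := hfB ξ₂ hξ₂strip hχξ₂
    have hsplit : ξ₁ - ξ₂ = (f ξ₁ - f ξ₂) + (a ξ₁ - a ξ₂) := by
      simp only [hfdef]; ring
    have hLip : ‖a ξ₁ - a ξ₂‖ ≤ 1/16 * ‖ξ₁ - ξ₂‖ := by
      have := hLipA4 ξ₂ hξ₂R4 ξ₁ hξ₁R4
      refine this.trans ?_
      apply mul_le_mul_of_nonneg_right _ (norm_nonneg _)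
      rw [div_le_div_iff₀ (by positivity) (by norm_num)]
      nlinarith
    have hX : ‖ξ₁ - ξ₂‖ ≤ 2*B + 1/16 * ‖ξ₁ - ξ₂‖ := by
      calc ‖ξ₁ - ξ₂‖ = ‖(f ξ₁ - f ξ₂) + (a ξ₁ - a ξ₂)‖ := by
            rw [← hsplit]
        _ ≤ ‖f ξ₁ - f ξ₂‖ + ‖a ξ₁ - a ξ₂‖ := norm_add_le _ _
        _ ≤ (‖f ξ₁‖ + ‖f ξ₂‖) + 1/16 * ‖ξ₁ - ξ₂‖ := by
            refine add_le_add ?_ hLip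
            simpa [sub_eq_add_neg] using norm_add_le (f ξ₁) (-(f ξ₂))
        _ ≤ 2*B + 1/16 * ‖ξ₁ - ξ₂‖ := by linarith
    have hsq : (32/15 : ℝ) ≤ Real.sqrt 6 := by
      have h1 : Real.sqrt ((32/15)^2) ≤ Real.sqrt 6 := Real.sqrt_le_sqrt (by norm_num)
      rwa [Real.sqrt_sq (by norm_num : (0:ℝ) ≤ 32/15)] at h1
    linarith [mul_le_mul_of_nonneg_right hsq hB0, hX, norm_nonneg (ξ₁ - ξ₂)]
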